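/- Let P(T) = Σ_{k≥1} π_k T^k ∈ 𝒪_E[[T]] be a power series with zero constant term such that π_1 ≠ 0 and π_1 ∈ 𝔪_E, and let A(T) = Σ_{k≥1} a_k T^k ∈ E[[T]] be the unique power series with zero constant term, a_1 = 1, and A(P(T)) = π_1·A(T). Then for every x ∈ E with ‖x‖ < ‖π_1‖, the family (a_k x^k)_{k≥1} is summable in E (equivalently, a_k x^k → 0), so the series A(x) = Σ_{k≥1} a_k x^k converges. -/

import Mathlib

open PowerSeries

/-- Formal substitution `f(g)` of a power series `g` with zero constant term into a power
series `f`. -/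
noncomputable def PowerSeries.comp {R : Type*} [CommRing R] (f g : PowerSeries R) :
    PowerSeries R :=
  PowerSeries.mk fun n => ∑ k ∈ Finset.range (n + 1), coeff k f * coeff n (g ^ k)

section Aux

variable {E : Type*} [NormedField E] [IsUltrametricDist E]

/-- Integrality of coefficients of powers. -/
lemma aux_norm_coeff_pow_le (P : PowerSeries E) (hPint : ∀ n, ‖coeff n P‖ ≤ 1) :
    ∀ (k n : ℕ), ‖coeff n (P ^ k)‖ ≤ 1 := by
  intro k
  induction k with
  | zero =>
    intro n
    simp only [pow_zero, coeff_one]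
    split <;> simp
  | succ k ih =>
    intro n
    rw [pow_succ, PowerSeries.coeff_mul]
    refine IsUltrametricDist.norm_sum_le_of_forall_le_of_nonneg zero_le_one ?_
    rintro ⟨i, j⟩ -
    calc ‖coeff i (P ^ k) * coeff j P‖ = ‖coeff i (P ^ k)‖ * ‖coeff j P‖ :=
          norm_mul _ _
      _ ≤ 1 * 1 := mul_le_mul (ih i) (hPint j) (norm_nonneg _) zero_le_one
      _ = 1 := one_mul 1

lemma aux_coeff_pow_lt (P : PowerSeries E) (hP0 : constantCoeff P = 0) :
    ∀ (k n : ℕ), n < k → coeff n (P ^ k) = 0 := by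
  intro k n hn
  have hdvd : (PowerSeries.X : PowerSeries E) ^ k ∣ P ^ k :=
    pow_dvd_pow_of_dvd (PowerSeries.X_dvd_iff.mpr hP0) k
  exact (PowerSeries.X_pow_dvd_iff.mp hdvd) n hn

lemma aux_coeff_pow_diag (P : PowerSeries E) (hP0 : constantCoeff P = 0) :
    ∀ n : ℕ, coeff n (P ^ n) = (coeff 1 P) ^ n := by
  intro n
  induction n with
  | zero => simp
  | succ n ih =>
    rw [pow_succ, PowerSeries.coeff_mul]
    rw [Finset.sum_eq_single (n, 1)]
    · rw [ih, pow_succ]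
    · rintro ⟨i, j⟩ hij hne
      rw [Finset.HasAntidiagonal.mem_antidiagonal] at hij
      rcases lt_trichotomy i n with h | h | h
      · rw [aux_coeff_pow_lt P hP0 n i h, zero_mul]
      · subst h
        have : j = 1 := by omega
        exact absurd (by rw [this]) hne
      · have hj : j = 0 := by omega
        subst hj
        simpa using Or.inr hP0
    · intro h
      exact absurd (Finset.HasAntidiagonal.mem_antidiagonal.mpr (by omega)) h

end Aux

/-- Let `P = Σ_{k≥1} π_k T^k ∈ 𝒪_E[[T]]` with `π₁ ≠ 0`, `π₁ ∈ 𝔪_E`, and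
let `A = Σ_{k≥1} a_k T^k ∈ E[[T]]` be the unique power series with zero constant term,
`a₁ = 1`, and `A(P(T)) = π₁·A(T)`. Then for every `x ∈ E` with `‖x‖ < ‖π₁‖`, the family
`(a_k x^k)` is summable in `E`, so the series `A(x)` converges. -/
theorem logarithm_summable
    {p : ℕ} [Fact p.Prime] (E : Type*) [NormedField E] [IsUltrametricDist E]
    [NormedAlgebra ℚ_[p] E] [FiniteDimensional ℚ_[p] E]
    (P : PowerSeries E) (hPint : ∀ n, ‖coeff n P‖ ≤ 1)
    (hP0 : constantCoeff P = 0)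
    (hπ1 : coeff 1 P ≠ 0) (hπ1m : ‖coeff 1 P‖ < 1)
    (A : PowerSeries E) (hA0 : constantCoeff A = 0) (hA1 : coeff 1 A = 1)
    (hAP : A.comp P = C (coeff 1 P) * A)
    (x : E) (hx : ‖x‖ < ‖coeff 1 P‖) :
    Summable (fun k : ℕ => coeff k A * x ^ k) := by
  have : CompleteSpace E := FiniteDimensional.complete ℚ_[p] E
  set π : E := coeff 1 P with hπ
  set c : ℝ := ‖π‖ with hc
  have hc0 : 0 < c := norm_pos_iff.mpr hπ1
  have hcinv : 1 ≤ c⁻¹ := by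
    rw [le_inv_comm₀ one_pos hc0]
    simpa using hπ1m.le
  -- key bound: ‖a_n‖ ≤ c * (c⁻¹)^n
  have key : ∀ n : ℕ, ‖coeff n A‖ ≤ c * c⁻¹ ^ n := by
    intro n
    induction n using Nat.strong_induction_on with
    | _ n ih =>
      match n with
      | 0 =>
        simp only [PowerSeries.coeff_zero_eq_constantCoeff, hA0, norm_zero, pow_zero, mul_one]
        exact hc0.le
      | 1 =>
        rw [hA1, norm_one, pow_one, mul_inv_cancel₀ hc0.ne']
      | (m + 2) =>
        -- coefficient extraction from functional equation
        have hcoeff : ∑ k ∈ Finset.range (m + 2 + 1), coeff k A * coeff (m + 2) (P ^ k)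
            = π * coeff (m + 2) A := by
          have := congrArg (coeff (m + 2)) hAP
          rwa [PowerSeries.comp, PowerSeries.coeff_mk, PowerSeries.coeff_C_mul] at this
        rw [Finset.sum_range_succ, aux_coeff_pow_diag P hP0 (m + 2), ← hπ] at hcoeff
        have heq : coeff (m + 2) A * (π - π ^ (m + 2))
            = ∑ k ∈ Finset.range (m + 2), coeff k A * coeff (m + 2) (P ^ k) := by
          linear_combination -hcoeff
        -- norm of π - π^(m+2) is c
        have hnorm_sub : ‖π - π ^ (m + 2)‖ = c := by
          have h1 : ‖π ^ (m + 2)‖ < c := by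
            rw [norm_pow]
            calc c ^ (m + 2) ≤ c ^ 2 := by
                  apply pow_le_pow_of_le_one hc0.le hπ1m.le
                  omega
              _ < c := by nlinarith
          have h2 : ‖π - π ^ (m + 2)‖ ≤ max ‖π‖ ‖π ^ (m + 2)‖ := by
            simpa [sub_eq_add_neg] using IsUltrametricDist.norm_add_le_max π (-(π ^ (m + 2)))
          have h3 : ‖π - π ^ (m + 2)‖ ≥ c := by
            have := IsUltrametricDist.norm_add_le_max (π - π ^ (m + 2)) (π ^ (m + 2))
            simp only [sub_add_cancel] at this
            rcases le_max_iff.mp this with h | h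
            · exact h
            · linarith
          have h4 : max ‖π‖ ‖π ^ (m + 2)‖ = c := max_eq_left (by linarith)
          linarith [h2.trans_eq h4]
        -- bound the RHS sum
        have hsum : ‖∑ k ∈ Finset.range (m + 2), coeff k A * coeff (m + 2) (P ^ k)‖
            ≤ c * c⁻¹ ^ (m + 1) := by
          refine IsUltrametricDist.norm_sum_le_of_forall_le_of_nonneg (by positivity) ?_
          intro k hk
          rw [Finset.mem_range] at hk
          calc ‖coeff k A * coeff (m + 2) (P ^ k)‖
              = ‖coeff k A‖ * ‖coeff (m + 2) (P ^ k)‖ := norm_mul _ _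
            _ ≤ (c * c⁻¹ ^ k) * 1 := by
                apply mul_le_mul (ih k hk) (aux_norm_coeff_pow_le P hPint k (m + 2))
                  (norm_nonneg _) (by positivity)
            _ = c * c⁻¹ ^ k := mul_one _
            _ ≤ c * c⁻¹ ^ (m + 1) := by
                apply mul_le_mul_of_nonneg_left _ hc0.le
                exact pow_le_pow_right₀ hcinv (by omega)
        have hstep : ‖coeff (m + 2) A‖ * c ≤ c * c⁻¹ ^ (m + 1) := by
          calc ‖coeff (m + 2) A‖ * c = ‖coeff (m + 2) A * (π - π ^ (m + 2))‖ := by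
                rw [norm_mul, hnorm_sub]
            _ ≤ c * c⁻¹ ^ (m + 1) := heq ▸ hsum
        have hfin : c * c⁻¹ ^ (m + 1) / c = c * c⁻¹ ^ (m + 2) := by
          have hcc : c * c⁻¹ = 1 := mul_inv_cancel₀ hc0.ne'
          calc c * c⁻¹ ^ (m + 1) / c = c / c * c⁻¹ ^ (m + 1) := by ring
            _ = c⁻¹ ^ (m + 1) := by rw [div_self hc0.ne', one_mul]
            _ = (c * c⁻¹) * c⁻¹ ^ (m + 1) := by rw [hcc, one_mul]
            _ = c * c⁻¹ ^ (m + 2) := by ring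
        have hle := (le_div_iff₀ hc0).mpr hstep
        rwa [hfin] at hle
  -- now conclude summability by comparison with a geometric series
  set r : ℝ := ‖x‖ / c with hr
  have hr0 : 0 ≤ r := by positivity
  have hr1 : r < 1 := (div_lt_one hc0).mpr hx
  refine Summable.of_norm_bounded (g := fun k => c * r ^ k)
    ((summable_geometric_of_lt_one hr0 hr1).mul_left c) ?_
  intro k
  calc ‖coeff k A * x ^ k‖ = ‖coeff k A‖ * ‖x‖ ^ k := by rw [norm_mul, norm_pow]
    _ ≤ (c * c⁻¹ ^ k) * ‖x‖ ^ k := by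
        apply mul_le_mul_of_nonneg_right (key k) (by positivity)
    _ = c * r ^ k := by
        rw [hr, div_pow, div_eq_mul_inv, ← inv_pow]
        ring
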